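/- Let d ≥ 0 and k ≥ 2 be integers. For every function f : ℤ^d → ℂ supported in the binary cube {0,1}^d and every real exponent p with 0 < p ≤ 2^k / log₂(2k+2), one has ‖f‖_{U^k} ≤ ‖f‖_{ℓ^p}. -/

import Mathlib

open scoped BigOperators

/-- The `2^k`-th power of the Gowers uniformity norm (the Gowers box form):
`‖f‖_{U^k}^{2^k} = Σ_{a,h₁,…,h_k} Π_{ε∈{0,1}^k} C^{ε₁+⋯+ε_k} f(a+ε₁h₁+⋯+ε_kh_k)`. -/
noncomputable def gbox (k : ℕ) {G : Type*} [AddCommGroup G] (f : G → ℂ) : ℂ :=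
  ∑' a : G, ∑' h : Fin k → G,
    ∏ ε : Fin k → Bool,
      (fun z : ℂ => (starRingEnd ℂ) z)^[(Finset.univ.filter fun i => ε i = true).card]
        (f (a + ∑ i ∈ Finset.univ.filter (fun i => ε i = true), h i))

/-- The Gowers uniformity norm `‖f‖_{U^k}`. -/
noncomputable def gnorm (k : ℕ) {G : Type*} [AddCommGroup G] (f : G → ℂ) : ℝ :=
  ‖gbox k f‖ ^ ((1 : ℝ) / 2 ^ k)

/-- The `ℓ^p` norm of `f`. -/
noncomputable def lpnorm (p : ℝ) {G : Type*} (f : G → ℂ) : ℝ :=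
  (∑' x : G, ‖f x‖ ^ p) ^ (1 / p)

/-- The discrete cube `{0,1,…,n-1}^d` inside `ℤ^d`. -/
def cube (n d : ℕ) : Set (Fin d → ℤ) := {x | ∀ i, 0 ≤ x i ∧ x i < n}

open Finset

namespace GLP

section Scalar
open Real

lemma aux_bern {q t : ℝ} (hq : 1 ≤ q) (ht : 2 ≤ t) :
    q ^ (t-2) * (q + t - 1) ≤ (q+1) ^ (t-1) := by
  have hq0 : (0:ℝ) < q := by linarith
  have h1 : (1:ℝ) + (t-1) * (1/q) ≤ (1 + 1/q) ^ (t-1) :=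
    one_add_mul_self_le_rpow_one_add
      (by
        have h : (0:ℝ) ≤ 1/q := by positivity
        linarith) (by linarith)
  have h2 : (q+1) ^ (t-1) = q ^ (t-1) * (1 + 1/q) ^ (t-1) := by
    rw [← Real.mul_rpow hq0.le (by positivity)]
    congr 1; field_simp
  have h3 : q ^ (t-1) = q ^ (t-2) * q := by
    rw [show t-1 = (t-2)+1 by ring, Real.rpow_add_one hq0.ne']
  have h4 : q * (1 + (t-1) * (1/q)) = q + t - 1 := by field_simp; ring
  calc q ^ (t-2) * (q + t - 1) = q ^ (t-2) * (q * (1 + (t-1)*(1/q))) := by rw [h4]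
    _ ≤ q ^ (t-2) * (q * (1 + 1/q) ^ (t-1)) := by
        have := Real.rpow_nonneg hq0.le (t-2)
        gcongr
    _ = (q+1) ^ (t-1) := by rw [h2, h3]; ring

lemma qlemma {t : ℝ} (ht : 2 ≤ t) {q : ℝ} (hq : 1 ≤ q) :
    q ^ t - 1 ≤ (q-1) * (q+1) ^ (t-1) := by
  set φ : ℝ → ℝ := fun q => (q-1) * (q+1) ^ (t-1) - q ^ t + 1 with hφ
  have hder : ∀ q : ℝ, 0 < q → HasDerivAt φ
      ((q+1) ^ (t-1) + (q-1) * (1 * (t-1) * (q+1) ^ (t-1-1)) - t * q ^ (t-1)) q := by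
    intro q hq0
    have d1 : HasDerivAt (fun y : ℝ => (y+1) ^ (t-1)) (1 * (t-1) * (q+1) ^ (t-1-1)) q :=
      ((hasDerivAt_id q).add_const 1).rpow_const (Or.inl (by positivity))
    have d2 : HasDerivAt (fun y : ℝ => (y-1) * (y+1) ^ (t-1))
        (1 * ((q+1) ^ (t-1)) + (q-1) * (1 * (t-1) * (q+1) ^ (t-1-1))) q :=
      ((hasDerivAt_id q).sub_const 1).mul d1
    have d3 : HasDerivAt (fun y : ℝ => y ^ t) (t * q ^ (t-1)) q :=
      Real.hasDerivAt_rpow_const (Or.inl hq0.ne')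
    have := (d2.sub d3).add_const 1
    have e : (q+1) ^ (t-1) + (q-1) * (1 * (t-1) * (q+1) ^ (t-1-1)) - t * q ^ (t-1)
        = 1 * ((q+1) ^ (t-1)) + (q-1) * (1 * (t-1) * (q+1) ^ (t-1-1)) - t * q ^ (t-1) := by ring
    rw [e]; exact this
  have hderiv_nonneg : ∀ q ∈ Set.Ioi (1:ℝ), 0 ≤
      ((q+1) ^ (t-1) + (q-1) * (1 * (t-1) * (q+1) ^ (t-1-1)) - t * q ^ (t-1)) := by
    intro q hq1
    have hq1' : (1:ℝ) ≤ q := le_of_lt hq1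
    have hq0 : (0:ℝ) < q := by linarith
    set P := (q+1) ^ (t-2) with hP
    set Q := q ^ (t-2) with hQ
    have hP0 : 0 ≤ P := Real.rpow_nonneg (by linarith) _
    have hQ0 : 0 ≤ Q := Real.rpow_nonneg hq0.le _
    have e1 : (q+1) ^ (t-1) = (q+1) * P := by
      rw [hP, show t-1 = (t-2)+1 by ring, Real.rpow_add_one (by positivity)]; ring
    have e2 : q ^ (t-1) = Q * q := by
      rw [hQ, show t-1 = (t-2)+1 by ring, Real.rpow_add_one hq0.ne']
    have e3 : t-1-1 = t-2 := by ring
    have hbern : Q * (q + t - 1) ≤ (q+1) * P := by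
      rw [← e1]; exact aux_bern hq1' ht
    have key : t * (Q * q) * (q+1) ≤ Q * (q + t - 1) * (t*(q-1)+2) := by
      nlinarith [mul_nonneg (mul_nonneg (mul_nonneg hQ0 (by linarith : (0:ℝ) ≤ q - 1))
        (by linarith : (0:ℝ) ≤ t - 1)) (by linarith : (0:ℝ) ≤ t - 2)]
    have key2 : t * (Q * q) * (q+1) ≤ ((q+1) * P) * (t*(q-1)+2) :=
      key.trans (by
        have h2' : (0:ℝ) ≤ t*(q-1)+2 := by nlinarith
        exact mul_le_mul_of_nonneg_right hbern h2')
    have key3 : t * (Q * q) ≤ P * (t*(q-1)+2) := by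
      have hq10 : (0:ℝ) < q + 1 := by linarith
      rw [show ((q+1) * P) * (t*(q-1)+2) = (q+1) * (P * (t*(q-1)+2)) by ring] at key2
      rw [show t * (Q * q) * (q+1) = (q+1) * (t * (Q * q)) by ring] at key2
      exact le_of_mul_le_mul_left key2 hq10
    rw [e1, e2, e3]
    nlinarith [key3]
  have hmono : MonotoneOn φ (Set.Ici (1:ℝ)) := by
    apply monotoneOn_of_deriv_nonneg (convex_Ici 1)
    · apply ContinuousOn.add
      apply ContinuousOn.sub
      · exact (continuousOn_id.sub continuousOn_const).mul
          ((continuousOn_id.add continuousOn_const).rpow_const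
            (fun x hx => Or.inl (by simp only [Set.mem_Ici] at hx; simp only [Pi.add_apply, id]; positivity)))
      · exact continuousOn_id.rpow_const (fun x hx => Or.inl
          (by simp only [Set.mem_Ici] at hx; positivity))
      · exact continuousOn_const
    · intro x hx
      rw [interior_Ici] at hx
      exact (hder x (by simp only [Set.mem_Ioi] at hx; linarith)).differentiableAt.differentiableWithinAt
    · intro x hx
      rw [interior_Ici] at hx
      rw [(hder x (by simp only [Set.mem_Ioi] at hx; linarith)).deriv]
      exact hderiv_nonneg x hx
  have h1 : φ 1 ≤ φ q := hmono (by simp) (by simpa using hq) hq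
  have hφ1 : φ 1 = 0 := by simp [hφ, Real.one_rpow]
  rw [hφ1] at h1
  simp only [hφ] at h1
  linarith

lemma Kmono {t : ℝ} (ht : 2 ≤ t) {q : ℝ} (hq : 1 ≤ q) :
    (2:ℝ)^t - 2 ≤ q ^ (-(t/2)) * ((q+1) ^ t - q ^ t - 1) := by
  set K : ℝ → ℝ := fun q => q ^ (-(t/2)) * ((q+1) ^ t - q ^ t - 1) with hK
  have hder : ∀ q : ℝ, 0 < q → HasDerivAt K
      ((-(t/2)) * q ^ (-(t/2)-1) * ((q+1) ^ t - q ^ t - 1)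
        + q ^ (-(t/2)) * (1 * t * (q+1) ^ (t-1) - t * q ^ (t-1))) q := by
    intro q hq0
    have d1 : HasDerivAt (fun y : ℝ => y ^ (-(t/2))) ((-(t/2)) * q ^ (-(t/2)-1)) q :=
      Real.hasDerivAt_rpow_const (Or.inl hq0.ne')
    have d2 : HasDerivAt (fun y : ℝ => (y+1) ^ t) (1 * t * (q+1) ^ (t-1)) q :=
      ((hasDerivAt_id q).add_const 1).rpow_const (Or.inl (by positivity))
    have d3 : HasDerivAt (fun y : ℝ => y ^ t) (t * q ^ (t-1)) q :=
      Real.hasDerivAt_rpow_const (Or.inl hq0.ne')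
    exact d1.mul ((d2.sub d3).sub_const 1)
  have hderiv_nonneg : ∀ q ∈ Set.Ioi (1:ℝ), 0 ≤
      ((-(t/2)) * q ^ (-(t/2)-1) * ((q+1) ^ t - q ^ t - 1)
        + q ^ (-(t/2)) * (1 * t * (q+1) ^ (t-1) - t * q ^ (t-1))) := by
    intro q hq1
    simp only [Set.mem_Ioi] at hq1
    have hq0 : (0:ℝ) < q := by linarith
    set R := q ^ (-(t/2)) with hR
    have hR0 : 0 < R := Real.rpow_pos_of_pos hq0 _
    have eR : q ^ (-(t/2)-1) = R * q⁻¹ := by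
      rw [hR, ← Real.rpow_neg_one q, ← Real.rpow_add hq0]
      ring_nf
    set B := (q+1) ^ (t-1) with hB
    set C := q ^ (t-1) with hC
    have eB : (q+1) ^ t = (q+1) * B := by
      rw [hB, show t = (t-1)+1 by ring, Real.rpow_add_one (by positivity)]; ring
    have eC : q ^ t = q * C := by
      rw [hC, show t = (t-1)+1 by ring, Real.rpow_add_one hq0.ne']; ring
    have hql : q * C - 1 ≤ (q-1) * B := by
      have := qlemma ht (le_of_lt hq1)
      rw [eC] at this; rw [← hB] at this; linarith
    rw [eR, eB, eC]
    have expand : (-(t/2)) * (R * q⁻¹) * ((q+1) * B - q * C - 1)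
        + R * (1 * t * B - t * C)
        = (t/2) * (R * q⁻¹) * (2*q*B - 2*q*C - ((q+1)*B - q*C - 1)) := by
      field_simp
      ring
    rw [expand]
    have ht0 : (0:ℝ) < t/2 := by linarith
    have hfac : (0:ℝ) ≤ (t/2) * (R * q⁻¹) := by positivity
    have : (0:ℝ) ≤ 2*q*B - 2*q*C - ((q+1)*B - q*C - 1) := by nlinarith [hql]
    positivity
  have hmono : MonotoneOn K (Set.Ici (1:ℝ)) := by
    apply monotoneOn_of_deriv_nonneg (convex_Ici 1)
    · apply ContinuousOn.mul
      · exact continuousOn_id.rpow_const (fun x hx => Or.inl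
          (by simp only [Set.mem_Ici] at hx; positivity))
      · apply ContinuousOn.sub
        apply ContinuousOn.sub
        · exact (continuousOn_id.add continuousOn_const).rpow_const (fun x hx => Or.inl
            (by simp only [Set.mem_Ici] at hx; simp only [Pi.add_apply, id]; positivity))
        · exact continuousOn_id.rpow_const (fun x hx => Or.inl
            (by simp only [Set.mem_Ici] at hx; positivity))
        · exact continuousOn_const
    · intro x hx
      rw [interior_Ici] at hx
      exact (hder x (by simp only [Set.mem_Ioi] at hx; linarith)).differentiableAt.differentiableWithinAt
    · intro x hx
      rw [interior_Ici] at hx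
      rw [(hder x (by simp only [Set.mem_Ioi] at hx; linarith)).deriv]
      exact hderiv_nonneg x hx
  have h1 : K 1 ≤ K q := hmono (by simp) (by simpa using hq) hq
  have hK1 : K 1 = (2:ℝ)^t - 2 := by
    simp only [hK, Real.one_rpow, one_mul]
    norm_num
    ring
  rw [hK1] at h1
  exact h1

lemma scalar_core {t a b : ℝ} (ht : 2 ≤ t) (hb : 0 < b) (hab : b ≤ a) :
    a^t + b^t + ((2:ℝ)^t - 2) * (a*b)^(t/2) ≤ (a+b)^t := by
  have ha : 0 < a := lt_of_lt_of_le hb hab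
  set q := a / b with hq
  have hq1 : (1:ℝ) ≤ q := (one_le_div hb).2 hab
  have hK := Kmono ht hq1
  have hfac : (0:ℝ) < b^t * q^(t/2) := by
    have := Real.rpow_pos_of_pos hb t
    have := Real.rpow_pos_of_pos (by linarith : (0:ℝ) < q) (t/2)
    positivity
  have hmul := mul_le_mul_of_nonneg_left hK hfac.le
  have e0 : b^t * q^(t/2) * (q ^ (-(t/2)) * ((q+1) ^ t - q ^ t - 1))
      = b^t * ((q+1)^t - q^t - 1) := by
    rw [show b^t * q^(t/2) * (q ^ (-(t/2)) * ((q+1) ^ t - q ^ t - 1))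
      = b^t * (q^(t/2) * q ^ (-(t/2))) * ((q+1) ^ t - q ^ t - 1) by ring,
      ← Real.rpow_add (by linarith : (0:ℝ) < q)]
    norm_num
  have e1 : b^t * (q+1)^t = (a+b)^t := by
    rw [← Real.mul_rpow hb.le (by positivity)]
    congr 1; rw [hq]; field_simp
  have e2 : b^t * q^t = a^t := by
    rw [← Real.mul_rpow hb.le (by positivity)]
    congr 1; rw [hq]; field_simp
  have e3 : b^t * q^(t/2) = (a*b)^(t/2) := by
    rw [show b^t = b^(t/2) * b^(t/2) by
      rw [← Real.rpow_add hb, ← two_mul]; ring_nf]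
    rw [mul_assoc, ← Real.mul_rpow hb.le (by positivity), ← Real.mul_rpow hb.le (by positivity)]
    congr 1; rw [hq]; field_simp
  rw [e0] at hmul
  have : (2:ℝ)^t - 2 ≥ 0 := by
    have : (2:ℝ)^((2:ℝ)) ≤ (2:ℝ)^t := Real.rpow_le_rpow_of_exponent_le (by norm_num) ht
    rw [show ((2:ℝ):ℝ) = ((2:ℕ):ℝ) by norm_num, Real.rpow_natCast] at this
    norm_num at this ⊢
    linarith
  calc a^t + b^t + ((2:ℝ)^t - 2) * (a*b)^(t/2)
      = a^t + b^t + (b^t * q^(t/2)) * ((2:ℝ)^t - 2) := by rw [e3]; ring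
    _ ≤ a^t + b^t + b^t * ((q+1)^t - q^t - 1) := by linarith [hmul]
    _ = (a+b)^t + (a^t + b^t - b^t*q^t - b^t) := by rw [← e1]; ring
    _ = (a+b)^t := by rw [e2]; ring

lemma scalar_ineq {t a b : ℝ} (ht : 2 ≤ t) (ha : 0 ≤ a) (hb : 0 ≤ b) :
    a^t + b^t + ((2:ℝ)^t - 2) * (a*b)^(t/2) ≤ (a+b)^t := by
  have ht0 : t ≠ 0 := by linarith
  have ht20 : t/2 ≠ 0 := by
    have : (0:ℝ) < t/2 := by linarith
    exact this.ne'
  rcases eq_or_lt_of_le ha with rfl | ha'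
  · rcases eq_or_lt_of_le hb with rfl | hb'
    · simp [Real.zero_rpow ht0, Real.zero_rpow ht20]
    · simp [Real.zero_rpow ht0, Real.zero_rpow ht20]
  rcases eq_or_lt_of_le hb with rfl | hb'
  · simp [Real.zero_rpow ht0, Real.zero_rpow ht20]
  rcases le_total b a with hab | hab
  · exact scalar_core ht hb' hab
  · have := scalar_core ht ha' hab
    calc a^t + b^t + ((2:ℝ)^t - 2) * (a*b)^(t/2)
        = b^t + a^t + ((2:ℝ)^t - 2) * (b*a)^(t/2) := by rw [mul_comm b a]; ring
      _ ≤ (b+a)^t := this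
      _ = (a+b)^t := by rw [add_comm]

end Scalar


def bin : Finset ℤ := {0, 1}
def tri : Finset ℤ := {-1, 0, 1}

def Acube (d : ℕ) : Finset (Fin d → ℤ) := Fintype.piFinset fun _ => bin
def Hcube (d : ℕ) : Finset (Fin d → ℤ) := Fintype.piFinset fun _ => tri
def HS (k d : ℕ) : Finset (Fin k → Fin d → ℤ) := Fintype.piFinset fun _ => Hcube d

def epsSum {k : ℕ} {G : Type*} [AddCommMonoid G] (ε : Fin k → Bool) (h : Fin k → G) : G :=
  ∑ j ∈ Finset.univ.filter (fun j => ε j = true), h j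

noncomputable def Box (k d : ℕ) (u : (Fin d → ℤ) → ℝ) : ℝ :=
  ∑ a ∈ Acube d, ∑ h ∈ HS k d, ∏ ε : Fin k → Bool, u (a + epsSum ε h)

def Spt (d : ℕ) (u : (Fin d → ℤ) → ℝ) : Prop := ∀ x, x ∉ Acube d → u x = 0

lemma Box_nonneg {k d : ℕ} {u : (Fin d → ℤ) → ℝ} (hu : ∀ x, 0 ≤ u x) : 0 ≤ Box k d u :=
  Finset.sum_nonneg fun _ _ => Finset.sum_nonneg fun _ _ => Finset.prod_nonneg fun _ _ => hu _

lemma mem_Acube {d : ℕ} {x : Fin d → ℤ} : x ∈ Acube d ↔ ∀ j, x j = 0 ∨ x j = 1 := by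
  simp [Acube, bin, Fintype.mem_piFinset]

lemma mem_Hcube {d : ℕ} {x : Fin d → ℤ} : x ∈ Hcube d ↔ ∀ j, x j = -1 ∨ x j = 0 ∨ x j = 1 := by
  simp [Hcube, tri, Fintype.mem_piFinset]

lemma sub_mem_Hcube {d : ℕ} {a y : Fin d → ℤ} (ha : a ∈ Acube d) (hy : y ∈ Acube d) :
    y - a ∈ Hcube d := by
  rw [mem_Acube] at ha hy
  rw [mem_Hcube]
  intro j
  have := ha j; have := hy j
  simp only [Pi.sub_apply]
  omega

section CSsec

variable {k d : ℕ}

/-- The "half-cube" product. -/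
noncomputable def Psi (i : Fin k) (g : (Fin d → ℤ) → ℝ) (y : Fin d → ℤ)
    (hb : Fin k → Fin d → ℤ) : ℝ :=
  ∏ ε ∈ Finset.univ.filter (fun ε : Fin k → Bool => ε i = false), g (y + epsSum ε hb)

lemma Psi_nonneg {i : Fin k} {g : (Fin d → ℤ) → ℝ} (hg : ∀ x, 0 ≤ g x) (y hb) :
    0 ≤ Psi i g y hb := Finset.prod_nonneg fun _ _ => hg _

lemma epsSum_false (i : Fin k) {ε : Fin k → Bool} (hε : ε i = false)
    (h : Fin k → Fin d → ℤ) : epsSum ε (Function.update h i 0) = epsSum ε h := by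
  apply Finset.sum_congr rfl
  intro j hj
  simp only [Finset.mem_filter] at hj
  have : j ≠ i := by rintro rfl; rw [hj.2] at hε; exact Bool.noConfusion hε
  rw [Function.update_of_ne this]

lemma filter_update_false (ε : Fin k → Bool) (i : Fin k) :
    Finset.univ.filter (fun j => Function.update ε i false j = true)
      = (Finset.univ.filter (fun j => ε j = true)).erase i := by
  ext j
  by_cases hj : j = i <;> simp [Function.update_apply, hj]

lemma epsSum_true (i : Fin k) {ε : Fin k → Bool} (hε : ε i = true)
    (h : Fin k → Fin d → ℤ) :
    epsSum ε h = h i + epsSum (Function.update ε i false) (Function.update h i 0) := by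
  unfold epsSum
  rw [filter_update_false]
  have hi : i ∈ Finset.univ.filter (fun j => ε j = true) := by simp [hε]
  rw [← Finset.add_sum_erase _ h hi]
  congr 1
  apply Finset.sum_congr rfl
  intro j hj
  rw [Function.update_of_ne (Finset.ne_of_mem_erase hj)]

/-- (I1) splitting of the full cube product. -/
lemma prod_split (i : Fin k) (w : Bool → (Fin d → ℤ) → ℝ) (a : Fin d → ℤ)
    (h : Fin k → Fin d → ℤ) :
    ∏ ε : Fin k → Bool, w (ε i) (a + epsSum ε h)
      = Psi i (w false) a (Function.update h i 0)
        * Psi i (w true) (a + h i) (Function.update h i 0) := by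
  rw [← Finset.prod_filter_mul_prod_filter_not Finset.univ (fun ε : Fin k → Bool => ε i = false)]
  congr 1
  · apply Finset.prod_congr rfl
    intro ε hε
    simp only [Finset.mem_filter] at hε
    rw [hε.2, epsSum_false i hε.2]
  · unfold Psi
    apply Finset.prod_nbij' (fun ε => Function.update ε i false)
      (fun ε => Function.update ε i true)
    · intro ε hε
      simp
    · intro ε hε
      simp
    · intro ε hε
      simp only [Finset.mem_filter, Finset.mem_univ, true_and] at hε
      have hε' : ε i = true := by
        cases hεi : ε i
        · exact absurd hεi hε
        · rfl
      funext j
      by_cases hj : j = i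
      · subst hj; simp [hε']
      · simp [Function.update_apply, hj]
    · intro ε hε
      simp only [Finset.mem_filter, Finset.mem_univ, true_and] at hε
      funext j
      by_cases hj : j = i
      · subst hj; simp [hε]
      · simp [Function.update_apply, hj]
    · intro ε hε
      simp only [Finset.mem_filter, Finset.mem_univ, true_and] at hε
      have hε' : ε i = true := by
        cases hεi : ε i
        · exact absurd hεi hε
        · rfl
      rw [hε', epsSum_true i hε' h, ← add_assoc]

/-- the finset of `h`-tuples vanishing at `i`. -/
def HS0 (i : Fin k) (d : ℕ) : Finset (Fin k → Fin d → ℤ) :=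
  Fintype.piFinset (fun j => if j = i then ({0} : Finset (Fin d → ℤ)) else Hcube d)

lemma HS0_apply {i : Fin k} {hb : Fin k → Fin d → ℤ} (h : hb ∈ HS0 i d) : hb i = 0 := by
  have := (Fintype.mem_piFinset.1 h) i
  simpa using this

/-- (I2) decomposing the sum over `h`-tuples. -/
lemma sum_update_decomp (i : Fin k) (F : (Fin k → Fin d → ℤ) → ℝ) :
    ∑ h ∈ HS k d, F h
      = ∑ γ ∈ Hcube d, ∑ hb ∈ HS0 i d, F (Function.update hb i γ) := by
  rw [← Finset.sum_product']
  apply Finset.sum_nbij' (fun h => ((h i, Function.update h i 0) : (Fin d → ℤ) × (Fin k → Fin d → ℤ)))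
    (fun p => Function.update p.2 i p.1)
  · intro h hh
    simp only [Finset.mem_product]
    constructor
    · exact (Fintype.mem_piFinset.1 hh) i
    · rw [HS0, Fintype.mem_piFinset]
      intro j
      by_cases hj : j = i
      · subst hj; simp
      · simp only [Function.update_apply, if_neg hj, hj, if_false]
        exact (Fintype.mem_piFinset.1 hh) j
  · intro p hp
    simp only [Finset.mem_product] at hp
    rw [HS, Fintype.mem_piFinset]
    intro j
    by_cases hj : j = i
    · subst hj; simp [hp.1]
    · rw [Function.update_of_ne hj]
      have := (Fintype.mem_piFinset.1 hp.2) j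
      rwa [if_neg hj] at this
  · intro h hh
    funext j
    by_cases hj : j = i
    · subst hj; simp
    · simp [Function.update_apply, hj]
  · intro p hp
    simp only [Finset.mem_product] at hp
    have h0 : p.2 i = 0 := HS0_apply hp.2
    have : Function.update (Function.update p.2 i p.1) i 0 = p.2 := by
      funext j
      by_cases hj : j = i
      · subst hj; simp [h0]
      · simp [Function.update_apply, hj]
    simp [this]
  · intro h hh
    congr 1
    funext j
    by_cases hj : j = i
    · subst hj; simp
    · simp [Function.update_apply, hj]

/-- (I3) shifted sum. -/
lemma shift_sum {g : (Fin d → ℤ) → ℝ} (hg : Spt d g) {a : Fin d → ℤ} (ha : a ∈ Acube d) :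
    ∑ γ ∈ Hcube d, g (a + γ) = ∑ y ∈ Acube d, g y := by
  have hinj : ∀ x ∈ Hcube d, ∀ y ∈ Hcube d, a + x = a + y → x = y := by
    intro x _ y _ hxy
    exact add_left_cancel hxy
  rw [← Finset.sum_image hinj]
  refine (Finset.sum_subset ?_ ?_).symm
  · intro y hy
    rw [Finset.mem_image]
    exact ⟨y - a, sub_mem_Hcube ha hy, by ring⟩
  · intro y _ hy
    exact hg y hy

lemma Psi_spt {i : Fin k} {g : (Fin d → ℤ) → ℝ} (hg : Spt d g) {y : Fin d → ℤ}
    (hy : y ∉ Acube d) (hb : Fin k → Fin d → ℤ) : Psi i g y hb = 0 := by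
  unfold Psi
  apply Finset.prod_eq_zero (i := fun _ => false)
  · simp
  · have : epsSum (fun _ : Fin k => false) hb = 0 := by
      unfold epsSum
      simp
    rw [this, add_zero]
    exact hg y hy

lemma prod_split_const (i : Fin k) (g : (Fin d → ℤ) → ℝ) (a : Fin d → ℤ)
    (h : Fin k → Fin d → ℤ) :
    ∏ ε : Fin k → Bool, g (a + epsSum ε h)
      = Psi i g a (Function.update h i 0)
        * Psi i g (a + h i) (Function.update h i 0) :=
  prod_split i (fun _ => g) a h

lemma Spt_Psi (i : Fin k) {g : (Fin d → ℤ) → ℝ} (hg : Spt d g) (hb : Fin k → Fin d → ℤ) :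
    Spt d (fun y => Psi i g y hb) := fun y hy => Psi_spt hg hy hb

/-- The key rearrangement: the double sum as a sum of products over `HS0`. -/
lemma T_eq (i : Fin k) (w : Bool → (Fin d → ℤ) → ℝ) (hspt : ∀ b, Spt d (w b)) :
    ∑ a ∈ Acube d, ∑ h ∈ HS k d, ∏ ε : Fin k → Bool, w (ε i) (a + epsSum ε h)
      = ∑ hb ∈ HS0 i d, (∑ a ∈ Acube d, Psi i (w false) a hb)
          * (∑ y ∈ Acube d, Psi i (w true) y hb) := by
  have step1 : ∀ a, ∑ h ∈ HS k d, ∏ ε : Fin k → Bool, w (ε i) (a + epsSum ε h)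
      = ∑ hb ∈ HS0 i d, ∑ γ ∈ Hcube d, Psi i (w false) a hb * Psi i (w true) (a + γ) hb := by
    intro a
    rw [show (∑ h ∈ HS k d, ∏ ε : Fin k → Bool, w (ε i) (a + epsSum ε h))
        = ∑ h ∈ HS k d, Psi i (w false) a (Function.update h i 0)
            * Psi i (w true) (a + h i) (Function.update h i 0) from
      Finset.sum_congr rfl (fun h _ => prod_split i w a h)]
    rw [sum_update_decomp i]
    rw [Finset.sum_comm]
    apply Finset.sum_congr rfl
    intro hb hhb
    apply Finset.sum_congr rfl
    intro γ _
    have h0 : hb i = 0 := HS0_apply hhb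
    have e1 : Function.update (Function.update hb i γ) i 0 = hb := by
      rw [Function.update_idem, ← h0, Function.update_eq_self]
    have e2 : Function.update hb i γ i = γ := Function.update_self i γ hb
    rw [e1, e2]
  calc ∑ a ∈ Acube d, ∑ h ∈ HS k d, ∏ ε : Fin k → Bool, w (ε i) (a + epsSum ε h)
      = ∑ a ∈ Acube d, ∑ hb ∈ HS0 i d, ∑ γ ∈ Hcube d,
          Psi i (w false) a hb * Psi i (w true) (a + γ) hb :=
        Finset.sum_congr rfl (fun a _ => step1 a)
    _ = ∑ hb ∈ HS0 i d, ∑ a ∈ Acube d, ∑ γ ∈ Hcube d,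
          Psi i (w false) a hb * Psi i (w true) (a + γ) hb := Finset.sum_comm
    _ = ∑ hb ∈ HS0 i d, (∑ a ∈ Acube d, Psi i (w false) a hb)
          * (∑ y ∈ Acube d, Psi i (w true) y hb) := by
        apply Finset.sum_congr rfl
        intro hb _
        rw [Finset.sum_mul]
        apply Finset.sum_congr rfl
        intro a ha
        rw [← Finset.mul_sum]
        congr 1
        exact shift_sum (Spt_Psi i (hspt true) hb) ha

/-- (I5): un-Cauchy-Schwarz. -/
lemma sum_sq_Psi (i : Fin k) {g : (Fin d → ℤ) → ℝ} (hg : Spt d g) :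
    ∑ hb ∈ HS0 i d, (∑ a ∈ Acube d, Psi i g a hb)^2 = Box k d g := by
  have expand : ∀ hb ∈ HS0 i d, (∑ a ∈ Acube d, Psi i g a hb)^2
      = ∑ a ∈ Acube d, ∑ γ ∈ Hcube d, Psi i g a hb * Psi i g (a+γ) hb := by
    intro hb hhb
    rw [sq, Finset.sum_mul_sum]
    apply Finset.sum_congr rfl
    intro a ha
    rw [← Finset.mul_sum, ← Finset.mul_sum]
    congr 1
    exact (shift_sum (Spt_Psi i hg hb) ha).symm
  rw [Finset.sum_congr rfl expand, Finset.sum_comm]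
  unfold Box
  apply Finset.sum_congr rfl
  intro a _
  rw [sum_update_decomp i (fun h => ∏ ε : Fin k → Bool, g (a + epsSum ε h)), Finset.sum_comm]
  apply Finset.sum_congr rfl
  intro γ _
  apply Finset.sum_congr rfl
  intro hb hhb
  have h0 : hb i = 0 := HS0_apply hhb
  have e1 : Function.update (Function.update hb i γ) i 0 = hb := by
    rw [Function.update_idem, ← h0, Function.update_eq_self]
  have e2 : Function.update hb i γ i = γ := Function.update_self i γ hb
  rw [prod_split_const i g a (Function.update hb i γ), e1, e2]

/-- The Cauchy–Schwarz step. -/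
lemma CS (i : Fin k) (w : Bool → (Fin d → ℤ) → ℝ)
    (hw : ∀ b x, 0 ≤ w b x) (hspt : ∀ b, Spt d (w b)) :
    ∑ a ∈ Acube d, ∑ h ∈ HS k d, ∏ ε : Fin k → Bool, w (ε i) (a + epsSum ε h)
      ≤ Real.sqrt (Box k d (w false)) * Real.sqrt (Box k d (w true)) := by
  rw [T_eq i w hspt]
  set F := fun hb => ∑ a ∈ Acube d, Psi i (w false) a hb with hF
  set G := fun hb => ∑ y ∈ Acube d, Psi i (w true) y hb with hG
  have hFn : ∀ hb, 0 ≤ F hb := fun hb =>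
    Finset.sum_nonneg fun a _ => Psi_nonneg (hw false) a hb
  have hGn : ∀ hb, 0 ≤ G hb := fun hb =>
    Finset.sum_nonneg fun a _ => Psi_nonneg (hw true) a hb
  have hT0 : 0 ≤ ∑ hb ∈ HS0 i d, F hb * G hb :=
    Finset.sum_nonneg fun hb _ => mul_nonneg (hFn hb) (hGn hb)
  have hcs := Finset.sum_mul_sq_le_sq_mul_sq (HS0 i d) F G
  have hF2 : ∑ hb ∈ HS0 i d, F hb ^ 2 = Box k d (w false) := sum_sq_Psi i (hspt false)
  have hG2 : ∑ hb ∈ HS0 i d, G hb ^ 2 = Box k d (w true) := sum_sq_Psi i (hspt true)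
  rw [hF2, hG2] at hcs
  calc ∑ hb ∈ HS0 i d, F hb * G hb
      = Real.sqrt ((∑ hb ∈ HS0 i d, F hb * G hb)^2) := (Real.sqrt_sq hT0).symm
    _ ≤ Real.sqrt (Box k d (w false) * Box k d (w true)) := Real.sqrt_le_sqrt hcs
    _ = Real.sqrt (Box k d (w false)) * Real.sqrt (Box k d (w true)) := Real.sqrt_mul
        (Box_nonneg (hw false)) _

end CSsec

section Step

variable {k d : ℕ}

noncomputable def slice (u : (Fin (d+1) → ℤ) → ℝ) (b : ℤ) : (Fin d → ℤ) → ℝ :=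
  fun x => u (Fin.cons b x)

lemma mem_bin {m : ℤ} : m ∈ bin ↔ m = 0 ∨ m = 1 := by simp [bin]
lemma mem_tri {m : ℤ} : m ∈ tri ↔ m = -1 ∨ m = 0 ∨ m = 1 := by simp [tri]

lemma cons_mem_Acube {b : ℤ} (hb : b ∈ bin) {x : Fin d → ℤ} (hx : x ∈ Acube d) :
    Fin.cons b x ∈ Acube (d+1) := by
  rw [mem_Acube] at hx ⊢
  intro j
  refine Fin.cases ?_ ?_ j
  · simpa using (mem_bin.1 hb)
  · intro l
    simpa using hx l

lemma cons_not_mem_Acube {b : ℤ} (hb : b ∉ bin) (x : Fin d → ℤ) :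
    Fin.cons b x ∉ Acube (d+1) := by
  rw [mem_Acube]
  push_neg
  exact ⟨0, by simpa [mem_bin] using hb⟩

lemma slice_nonneg {u : (Fin (d+1) → ℤ) → ℝ} (hu : ∀ x, 0 ≤ u x) (b : ℤ) :
    ∀ x, 0 ≤ slice u b x := fun x => hu _

lemma slice_spt {u : (Fin (d+1) → ℤ) → ℝ} (hspt : Spt (d+1) u) {b : ℤ} (hb : b ∈ bin) :
    Spt d (slice u b) := by
  intro x hx
  apply hspt
  intro hmem
  apply hx
  rw [mem_Acube] at hmem ⊢
  intro j
  simpa using hmem j.succ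

lemma sum_piFinset_succ {M : Type*} [AddCommMonoid M] {d : ℕ} (s : Finset ℤ)
    (f : (Fin (d+1) → ℤ) → M) :
    ∑ x ∈ Fintype.piFinset (fun _ : Fin (d+1) => s), f x
      = ∑ b ∈ s, ∑ x ∈ Fintype.piFinset (fun _ : Fin d => s), f (Fin.cons b x) := by
  rw [← Finset.sum_product']
  apply Finset.sum_nbij' (fun x => ((x 0, Fin.tail x) : ℤ × (Fin d → ℤ)))
    (fun p => Fin.cons p.1 p.2)
  · intro x hx
    rw [Fintype.mem_piFinset] at hx
    simp only [Finset.mem_product]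
    exact ⟨hx 0, by rw [Fintype.mem_piFinset]; intro j; exact hx j.succ⟩
  · intro p hp
    simp only [Finset.mem_product] at hp
    rw [Fintype.mem_piFinset]
    intro j
    refine Fin.cases ?_ ?_ j
    · simpa using hp.1
    · intro l
      simpa using (Fintype.mem_piFinset.1 hp.2) l
  · intro x _
    exact Fin.cons_self_tail x
  · intro p _
    simp [Fin.tail_cons]
  · intro x _
    rw [Fin.cons_self_tail]

lemma sum_Acube_succ {M : Type*} [AddCommMonoid M] (f : (Fin (d+1) → ℤ) → M) :
    ∑ x ∈ Acube (d+1), f x = ∑ b ∈ bin, ∑ x ∈ Acube d, f (Fin.cons b x) :=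
  sum_piFinset_succ bin f

lemma sum_HS_succ {M : Type*} [AddCommMonoid M] (f : (Fin k → Fin (d+1) → ℤ) → M) :
    ∑ h ∈ HS k (d+1), f h
      = ∑ η ∈ Fintype.piFinset (fun _ : Fin k => tri),
          ∑ h' ∈ HS k d, f (fun i => Fin.cons (η i) (h' i)) := by
  rw [← Finset.sum_product']
  apply Finset.sum_nbij'
    (fun h => ((fun i => h i 0, fun i => Fin.tail (h i)) : (Fin k → ℤ) × (Fin k → Fin d → ℤ)))
    (fun p => fun i => Fin.cons (p.1 i) (p.2 i))
  · intro h hh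
    rw [HS, Fintype.mem_piFinset] at hh
    simp only [Finset.mem_product]
    constructor
    · rw [Fintype.mem_piFinset]
      intro i
      have := (Fintype.mem_piFinset.1 (hh i)) 0
      simpa [Hcube] using this
    · rw [HS, Fintype.mem_piFinset]
      intro i
      rw [Hcube, Fintype.mem_piFinset]
      intro j
      have := (Fintype.mem_piFinset.1 (hh i)) j.succ
      simpa [Hcube, Fin.tail] using this
  · intro p hp
    simp only [Finset.mem_product] at hp
    rw [HS, Fintype.mem_piFinset]
    intro i
    rw [Hcube, Fintype.mem_piFinset]
    intro j
    refine Fin.cases ?_ ?_ j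
    · simpa using (Fintype.mem_piFinset.1 hp.1) i
    · intro l
      have := (Fintype.mem_piFinset.1 ((Fintype.mem_piFinset.1 hp.2) i)) l
      simpa [Hcube] using this
  · intro h _
    funext i
    exact Fin.cons_self_tail (h i)
  · intro p _
    simp [Fin.tail_cons]
  · intro h _
    congr 1
    funext i
    rw [Fin.cons_self_tail]

lemma cons_add (b c : ℤ) (x y : Fin d → ℤ) :
    (Fin.cons b x : Fin (d+1) → ℤ) + Fin.cons c y = Fin.cons (b+c) (x+y) := by
  funext j
  refine Fin.cases ?_ ?_ j <;> simp

lemma epsSum_cons (ε : Fin k → Bool) (η : Fin k → ℤ) (h' : Fin k → Fin d → ℤ) :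
    epsSum ε (fun i => (Fin.cons (η i) (h' i) : Fin (d+1) → ℤ))
      = Fin.cons (epsSum ε η) (epsSum ε h') := by
  funext j
  refine Fin.cases ?_ ?_ j
  · rw [epsSum, Finset.sum_apply]
    simp [epsSum]
  · intro l
    rw [epsSum, Finset.sum_apply]
    simp [epsSum, Finset.sum_apply]

lemma epsSum_zero {G : Type*} [AddCommMonoid G] (ε : Fin k → Bool) :
    epsSum ε (0 : Fin k → G) = 0 := by
  simp [epsSum]

lemma epsSum_single (ε : Fin k → Bool) (i : Fin k) (c : ℤ) :
    epsSum ε (Pi.single i c) = if ε i = true then c else 0 := by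
  rw [epsSum]
  simp only [Pi.single_apply]
  rw [Finset.sum_ite_eq' (Finset.univ.filter (fun j => ε j = true)) i (fun _ => c)]
  simp

lemma filter_pair_eq {i j : Fin k} (hij : i ≠ j) :
    Finset.univ.filter (fun l : Fin k => (decide (l = i ∨ l = j)) = true) = {i, j} := by
  ext l
  simp [Finset.mem_insert]

lemma filter_single_eq (i : Fin k) :
    Finset.univ.filter (fun l : Fin k => (decide (l = i)) = true) = {i} := by
  ext l
  simp

/-- Classification of valid last-coordinate configurations. -/
lemma classify {b : ℤ} (hb : b ∈ bin) {η : Fin k → ℤ}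
    (hη : η ∈ Fintype.piFinset (fun _ : Fin k => tri))
    (hval : ∀ ε : Fin k → Bool, b + epsSum ε η ∈ bin) :
    η = 0 ∨ (b = 0 ∧ ∃ i, η = Pi.single i 1) ∨ (b = 1 ∧ ∃ i, η = Pi.single i (-1)) := by
  by_cases h0 : η = 0
  · exact Or.inl h0
  right
  obtain ⟨i, hi⟩ := Function.ne_iff.1 h0
  have hηi : η i = -1 ∨ η i = 0 ∨ η i = 1 := mem_tri.1 ((Fintype.mem_piFinset.1 hη) i)
  have hbv : b = 0 ∨ b = 1 := mem_bin.1 hb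
  have hvi : b + η i = 0 ∨ b + η i = 1 := by
    have := hval (fun l => decide (l = i))
    rw [epsSum, filter_single_eq, Finset.sum_singleton, mem_bin] at this
    exact this
  have hall : ∀ j, j ≠ i → η j = 0 := by
    intro j hj
    by_contra hjne
    have hηj : η j = -1 ∨ η j = 0 ∨ η j = 1 := mem_tri.1 ((Fintype.mem_piFinset.1 hη) j)
    have hvj : b + η j = 0 ∨ b + η j = 1 := by
      have := hval (fun l => decide (l = j))
      rw [epsSum, filter_single_eq, Finset.sum_singleton, mem_bin] at this
      exact this
    have hij : i ≠ j := Ne.symm hj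
    have hvij : b + (η i + η j) = 0 ∨ b + (η i + η j) = 1 := by
      have h2 := hval (fun l => decide (l = i ∨ l = j))
      rw [epsSum, filter_pair_eq hij, Finset.sum_pair hij, mem_bin] at h2
      exact h2
    have hi' : η i ≠ 0 := by simpa using hi
    omega
  have hsingle : η = Pi.single i (η i) := by
    funext j
    by_cases hj : j = i
    · subst hj; simp
    · rw [Pi.single_apply, if_neg hj]
      exact hall j hj
  have hi' : η i ≠ 0 := by simpa using hi
  rcases hbv with rfl | rfl
  · left
    refine ⟨rfl, i, ?_⟩
    have : η i = 1 := by omega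
    rwa [this] at hsingle
  · right
    refine ⟨rfl, i, ?_⟩
    have : η i = -1 := by omega
    rwa [this] at hsingle

end Step

section StepMain

variable {k d : ℕ}

noncomputable def Br (u : (Fin (d+1) → ℤ) → ℝ) (b : ℤ) (η : Fin k → ℤ) : ℝ :=
  ∑ a ∈ Acube d, ∑ h ∈ HS k d,
    ∏ ε : Fin k → Bool, u (Fin.cons (b + epsSum ε η) (a + epsSum ε h))

lemma Box_succ_decomp (u : (Fin (d+1) → ℤ) → ℝ) :
    Box k (d+1) u
      = ∑ b ∈ bin, ∑ η ∈ Fintype.piFinset (fun _ : Fin k => tri), Br u b η := by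
  unfold Box
  rw [sum_Acube_succ (fun a => ∑ h ∈ HS k (d+1), ∏ ε : Fin k → Bool, u (a + epsSum ε h))]
  apply Finset.sum_congr rfl
  intro b _
  have inner : ∀ x ∈ Acube d,
      (∑ h ∈ HS k (d+1), ∏ ε : Fin k → Bool, u ((Fin.cons b x : Fin (d+1) → ℤ) + epsSum ε h))
        = ∑ η ∈ Fintype.piFinset (fun _ : Fin k => tri), ∑ h' ∈ HS k d,
            ∏ ε : Fin k → Bool, u (Fin.cons (b + epsSum ε η) (x + epsSum ε h')) := by
    intro x _
    rw [sum_HS_succ (fun h => ∏ ε : Fin k → Bool, u ((Fin.cons b x : Fin (d+1) → ℤ) + epsSum ε h))]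
    apply Finset.sum_congr rfl; intro η _
    apply Finset.sum_congr rfl; intro h' _
    apply Finset.prod_congr rfl; intro ε _
    rw [epsSum_cons, cons_add]
  rw [Finset.sum_congr rfl inner, Finset.sum_comm]
  rfl

lemma Br_zero (u : (Fin (d+1) → ℤ) → ℝ) (b : ℤ) :
    Br u b (0 : Fin k → ℤ) = Box k d (slice u b) := by
  unfold Br Box slice
  apply Finset.sum_congr rfl; intro a _
  apply Finset.sum_congr rfl; intro h _
  apply Finset.prod_congr rfl; intro ε _
  rw [epsSum_zero, add_zero]

lemma Br_invalid (u : (Fin (d+1) → ℤ) → ℝ) (hspt : Spt (d+1) u) {b : ℤ} {η : Fin k → ℤ}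
    (ε₀ : Fin k → Bool) (hbad : b + epsSum ε₀ η ∉ bin) : Br u b η = 0 := by
  unfold Br
  apply Finset.sum_eq_zero; intro a _
  apply Finset.sum_eq_zero; intro h _
  apply Finset.prod_eq_zero (Finset.mem_univ ε₀)
  exact hspt _ (cons_not_mem_Acube hbad _)

lemma Br_single_le (u : (Fin (d+1) → ℤ) → ℝ) (hu : ∀ x, 0 ≤ u x) (hspt : Spt (d+1) u)
    {b c : ℤ} (hbc : (b = 0 ∧ c = 1) ∨ (b = 1 ∧ c = -1)) (i : Fin k) :
    Br u b (Pi.single i c)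
      ≤ Real.sqrt (Box k d (slice u 0) * Box k d (slice u 1)) := by
  rcases hbc with ⟨rfl, rfl⟩ | ⟨rfl, rfl⟩
  · have e : Br u 0 (Pi.single i 1) = ∑ a ∈ Acube d, ∑ h ∈ HS k d,
        ∏ ε : Fin k → Bool,
          (fun s => slice u (if s then 1 else 0)) (ε i) (a + epsSum ε h) := by
      unfold Br
      apply Finset.sum_congr rfl; intro a _
      apply Finset.sum_congr rfl; intro h _
      apply Finset.prod_congr rfl; intro ε _
      show u (Fin.cons (0 + epsSum ε (Pi.single i 1)) (a + epsSum ε h)) = _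
      rw [epsSum_single, zero_add]
      rfl
    have key := CS i (fun s => slice u (if s then 1 else 0))
      (fun s x => hu _)
      (fun s => by
        cases s
        · simpa using slice_spt hspt (show (0:ℤ) ∈ bin by simp [mem_bin])
        · simpa using slice_spt hspt (show (1:ℤ) ∈ bin by simp [mem_bin]))
    have key' : Br u 0 (Pi.single i 1)
        ≤ Real.sqrt (Box k d (slice u 0)) * Real.sqrt (Box k d (slice u 1)) := by
      rw [e]; exact key
    calc Br u 0 (Pi.single i 1)
        ≤ Real.sqrt (Box k d (slice u 0)) * Real.sqrt (Box k d (slice u 1)) := key'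
      _ = Real.sqrt (Box k d (slice u 0) * Box k d (slice u 1)) :=
          (Real.sqrt_mul (Box_nonneg (slice_nonneg hu 0)) _).symm
  · have e : Br u 1 (Pi.single i (-1)) = ∑ a ∈ Acube d, ∑ h ∈ HS k d,
        ∏ ε : Fin k → Bool,
          (fun s => slice u (if s then 0 else 1)) (ε i) (a + epsSum ε h) := by
      unfold Br
      apply Finset.sum_congr rfl; intro a _
      apply Finset.sum_congr rfl; intro h _
      apply Finset.prod_congr rfl; intro ε _
      show u (Fin.cons (1 + epsSum ε (Pi.single i (-1))) (a + epsSum ε h)) = _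
      rw [epsSum_single]
      cases hε : ε i
      · norm_num
        rfl
      · norm_num
        rfl
    have key := CS i (fun s => slice u (if s then 0 else 1))
      (fun s x => hu _)
      (fun s => by
        cases s
        · simpa using slice_spt hspt (show (1:ℤ) ∈ bin by simp [mem_bin])
        · simpa using slice_spt hspt (show (0:ℤ) ∈ bin by simp [mem_bin]))
    have key' : Br u 1 (Pi.single i (-1))
        ≤ Real.sqrt (Box k d (slice u 1)) * Real.sqrt (Box k d (slice u 0)) := by
      rw [e]; exact key
    calc Br u 1 (Pi.single i (-1))
        ≤ Real.sqrt (Box k d (slice u 1)) * Real.sqrt (Box k d (slice u 0)) := key'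
      _ = Real.sqrt (Box k d (slice u 1) * Box k d (slice u 0)) :=
          (Real.sqrt_mul (Box_nonneg (slice_nonneg hu 1)) _).symm
      _ = Real.sqrt (Box k d (slice u 0) * Box k d (slice u 1)) := by rw [mul_comm]

lemma eta_sum_bound (u : (Fin (d+1) → ℤ) → ℝ) (hu : ∀ x, 0 ≤ u x) (hspt : Spt (d+1) u)
    {b c : ℤ} (hbc : (b = 0 ∧ c = 1) ∨ (b = 1 ∧ c = -1)) :
    ∑ η ∈ Fintype.piFinset (fun _ : Fin k => tri), Br u b η
      ≤ Box k d (slice u b)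
        + (k : ℝ) * Real.sqrt (Box k d (slice u 0) * Box k d (slice u 1)) := by
  have hb : b ∈ bin := by rcases hbc with ⟨rfl,_⟩|⟨rfl,_⟩ <;> simp [mem_bin]
  have hc0 : c ≠ 0 := by rcases hbc with ⟨_,rfl⟩|⟨_,rfl⟩ <;> norm_num
  have hctri : c ∈ tri := by rcases hbc with ⟨_,rfl⟩|⟨_,rfl⟩ <;> simp [mem_tri]
  set SQ := Real.sqrt (Box k d (slice u 0) * Box k d (slice u 1)) with hSQ
  have hSQ0 : 0 ≤ SQ := Real.sqrt_nonneg _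
  have h0E : (0 : Fin k → ℤ) ∈ Fintype.piFinset (fun _ : Fin k => tri) := by
    rw [Fintype.mem_piFinset]; intro j; simp [mem_tri]
  have hinj : Function.Injective (fun i : Fin k => Pi.single i c) := by
    intro i j hij
    by_contra hne
    have hij' : (Pi.single i c : Fin k → ℤ) = Pi.single j c := hij
    have h1 := congrFun hij' i
    rw [Pi.single_eq_same, Pi.single_eq_of_ne hne] at h1
    exact hc0 h1
  set Sgl : Finset (Fin k → ℤ) := Finset.univ.image (fun i : Fin k => Pi.single i c) with hSgl
  have hsub : Sgl ⊆ (Fintype.piFinset (fun _ : Fin k => tri)).erase 0 := by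
    intro η hη
    obtain ⟨i, _, rfl⟩ := Finset.mem_image.1 hη
    rw [Finset.mem_erase]
    constructor
    · intro h
      have := congrFun h i
      rw [Pi.single_eq_same] at this
      exact hc0 this
    · rw [Fintype.mem_piFinset]
      intro j
      rw [Pi.single_apply]
      split
      · exact hctri
      · simp [mem_tri]
  have hterm : ∀ η ∈ (Fintype.piFinset (fun _ : Fin k => tri)).erase 0,
      Br u b η ≤ if η ∈ Sgl then SQ else 0 := by
    intro η hη
    rw [Finset.mem_erase] at hη
    by_cases hs : η ∈ Sgl
    · rw [if_pos hs]
      obtain ⟨i, _, rfl⟩ := Finset.mem_image.1 hs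
      exact Br_single_le u hu hspt hbc i
    · rw [if_neg hs]
      by_cases hval : ∀ ε : Fin k → Bool, b + epsSum ε η ∈ bin
      · exfalso
        rcases classify hb hη.2 hval with h0 | ⟨hb0, i, rfl⟩ | ⟨hb1, i, rfl⟩
        · exact hη.1 h0
        · apply hs
          rw [hSgl, Finset.mem_image]
          refine ⟨i, Finset.mem_univ i, ?_⟩
          rcases hbc with ⟨_, rfl⟩ | ⟨hb', _⟩
          · rfl
          · rw [hb'] at hb0; exact absurd hb0 (by norm_num)
        · apply hs
          rw [hSgl, Finset.mem_image]
          refine ⟨i, Finset.mem_univ i, ?_⟩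
          rcases hbc with ⟨hb', _⟩ | ⟨_, rfl⟩
          · rw [hb'] at hb1; exact absurd hb1 (by norm_num)
          · rfl
      · push_neg at hval
        obtain ⟨ε₀, hbad⟩ := hval
        exact le_of_eq (Br_invalid u hspt ε₀ hbad)
  calc ∑ η ∈ Fintype.piFinset (fun _ : Fin k => tri), Br u b η
      = Br u b (0 : Fin k → ℤ)
          + ∑ η ∈ (Fintype.piFinset (fun _ : Fin k => tri)).erase 0, Br u b η :=
        (Finset.add_sum_erase _ _ h0E).symm
    _ ≤ Box k d (slice u b)
        + ∑ η ∈ (Fintype.piFinset (fun _ : Fin k => tri)).erase 0,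
            (if η ∈ Sgl then SQ else 0) := by
        rw [Br_zero]
        exact add_le_add (le_refl _) (Finset.sum_le_sum hterm)
    _ = Box k d (slice u b) + (k : ℝ) * SQ := by
        congr 1
        rw [← Finset.sum_subset hsub (fun x _ hx => if_neg hx)]
        rw [Finset.sum_congr rfl (fun x hx => if_pos hx), Finset.sum_const]
        rw [hSgl, Finset.card_image_of_injective _ hinj, Finset.card_univ, Fintype.card_fin]
        rw [nsmul_eq_mul]

lemma Box_succ_le (u : (Fin (d+1) → ℤ) → ℝ) (hu : ∀ x, 0 ≤ u x) (hspt : Spt (d+1) u) :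
    Box k (d+1) u ≤ Box k d (slice u 0) + Box k d (slice u 1)
      + (2*(k:ℝ)) * Real.sqrt (Box k d (slice u 0) * Box k d (slice u 1)) := by
  rw [Box_succ_decomp u]
  rw [show (bin : Finset ℤ) = {0, 1} from rfl, Finset.sum_pair (by norm_num : (0:ℤ) ≠ 1)]
  have h0 := eta_sum_bound (k := k) u hu hspt (Or.inl ⟨rfl, rfl⟩)
  have h1 := eta_sum_bound (k := k) u hu hspt (Or.inr ⟨rfl, rfl⟩)
  linarith

end StepMain

section Main

lemma Acube_zero : Acube 0 = {(0 : Fin 0 → ℤ)} := by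
  apply Finset.eq_singleton_iff_unique_mem.2
  constructor
  · rw [mem_Acube]; intro j; exact j.elim0
  · intro x _; funext j; exact j.elim0

lemma HS_zero {k : ℕ} : HS k 0 = {(0 : Fin k → Fin 0 → ℤ)} := by
  apply Finset.eq_singleton_iff_unique_mem.2
  constructor
  · rw [HS, Fintype.mem_piFinset]; intro i
    rw [Hcube, Fintype.mem_piFinset]; intro j; exact j.elim0
  · intro x _; funext i j; exact j.elim0

lemma box_le_rpow (k : ℕ) (t p : ℝ) (ht : 2 ≤ t) (h2t : (2:ℝ)^t = 2*(k:ℝ)+2)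
    (hpt : p * t = (2:ℝ)^(k:ℕ)) (hp : 0 < p) :
    ∀ d (u : (Fin d → ℤ) → ℝ), (∀ x, 0 ≤ u x) → Spt d u →
      Box k d u ≤ (∑ x ∈ Acube d, u x ^ p) ^ t := by
  intro d
  induction d with
  | zero =>
      intro u hu hspt
      rw [Box, Acube_zero, HS_zero, Finset.sum_singleton, Finset.sum_singleton,
        Finset.sum_singleton]
      have hprod : (∏ ε : Fin k → Bool, u ((0:Fin 0 → ℤ) + epsSum ε 0)) = u 0 ^ (2^k : ℕ) := by
        have hconst : ∀ ε : Fin k → Bool, u ((0:Fin 0 → ℤ) + epsSum ε 0) = u 0 := by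
          intro ε; rw [epsSum_zero, add_zero]
        rw [Finset.prod_congr rfl (fun ε _ => hconst ε),
          Finset.prod_const, Finset.card_univ]
        congr 1
        simp [Fintype.card_fun]
      rw [hprod]
      have h1 : u 0 ^ (2^k : ℕ) = (u 0 : ℝ) ^ ((2:ℝ)^(k:ℕ)) := by
        rw [show ((2:ℝ)^(k:ℕ)) = (((2^k : ℕ) : ℕ) : ℝ) by push_cast; ring,
          Real.rpow_natCast]
      rw [h1, ← hpt, Real.rpow_mul (hu 0)]
  | succ d ih =>
      intro u hu hspt
      have hu0 : ∀ x, 0 ≤ slice u 0 x := slice_nonneg hu 0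
      have hu1 : ∀ x, 0 ≤ slice u 1 x := slice_nonneg hu 1
      have hspt0 : Spt d (slice u 0) := slice_spt hspt (by simp [mem_bin])
      have hspt1 : Spt d (slice u 1) := slice_spt hspt (by simp [mem_bin])
      set α := ∑ x ∈ Acube d, slice u 0 x ^ p with hα
      set β := ∑ x ∈ Acube d, slice u 1 x ^ p with hβ
      have hα0 : 0 ≤ α := Finset.sum_nonneg fun x _ => Real.rpow_nonneg (hu0 x) p
      have hβ0 : 0 ≤ β := Finset.sum_nonneg fun x _ => Real.rpow_nonneg (hu1 x) p
      have hIH0 : Box k d (slice u 0) ≤ α ^ t := ih (slice u 0) hu0 hspt0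
      have hIH1 : Box k d (slice u 1) ≤ β ^ t := ih (slice u 1) hu1 hspt1
      have hBox := Box_succ_le (k := k) u hu hspt
      have hsqrt : Real.sqrt (Box k d (slice u 0) * Box k d (slice u 1)) ≤ (α*β)^(t/2) := by
        have hprod_le : Box k d (slice u 0) * Box k d (slice u 1) ≤ α^t * β^t :=
          mul_le_mul hIH0 hIH1 (Box_nonneg hu1) (Real.rpow_nonneg hα0 t)
        calc Real.sqrt (Box k d (slice u 0) * Box k d (slice u 1))
            ≤ Real.sqrt (α^t * β^t) := Real.sqrt_le_sqrt hprod_le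
          _ = Real.sqrt ((α*β)^t) := by rw [← Real.mul_rpow hα0 hβ0]
          _ = ((α*β)^t) ^ ((1:ℝ)/2) := Real.sqrt_eq_rpow _
          _ = (α*β)^(t/2) := by
              rw [← Real.rpow_mul (mul_nonneg hα0 hβ0)]
              ring_nf
      have hsum : ∑ x ∈ Acube (d+1), u x ^ p = α + β := by
        rw [sum_Acube_succ (fun x => u x ^ p),
          show (bin : Finset ℤ) = {0, 1} from rfl,
          Finset.sum_pair (by norm_num : (0:ℤ) ≠ 1)]
        rfl
      have hsc := scalar_ineq (t := t) (a := α) (b := β) ht hα0 hβ0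
      rw [hsum]
      have hk2 : (2:ℝ)*(k:ℝ) = (2:ℝ)^t - 2 := by rw [h2t]; ring
      calc Box k (d+1) u
          ≤ Box k d (slice u 0) + Box k d (slice u 1)
            + (2*(k:ℝ)) * Real.sqrt (Box k d (slice u 0) * Box k d (slice u 1)) := hBox
        _ ≤ α^t + β^t + (2*(k:ℝ)) * ((α*β)^(t/2)) := by
            have h1 := mul_le_mul_of_nonneg_left hsqrt (by positivity : (0:ℝ) ≤ 2*(k:ℝ))
            have h2 := add_le_add (add_le_add hIH0 hIH1) h1
            linarith
        _ = α^t + β^t + ((2:ℝ)^t - 2) * ((α*β)^(t/2)) := by rw [← hk2]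
        _ ≤ (α+β)^t := hsc

lemma lp_mono {d : ℕ} (u : (Fin d → ℤ) → ℝ) (hu : ∀ x, 0 ≤ u x) {p q : ℝ}
    (hp : 0 < p) (hpq : p ≤ q) :
    (∑ x ∈ Acube d, u x ^ q) ^ (1/q) ≤ (∑ x ∈ Acube d, u x ^ p) ^ (1/p) := by
  have hq : 0 < q := lt_of_lt_of_le hp hpq
  set N := ∑ x ∈ Acube d, u x ^ p with hN
  have hN0 : 0 ≤ N := Finset.sum_nonneg fun x _ => Real.rpow_nonneg (hu x) p
  rcases eq_or_lt_of_le hN0 with hN' | hN'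
  · have hux : ∀ x ∈ Acube d, u x = 0 := by
      intro x hx
      by_contra hne
      have hpos : 0 < u x := lt_of_le_of_ne (hu x) (Ne.symm hne)
      have h1 : u x ^ p ≤ N :=
        Finset.single_le_sum (f := fun x => u x ^ p)
          (fun x _ => Real.rpow_nonneg (hu x) p) hx
      have h2 : 0 < u x ^ p := Real.rpow_pos_of_pos hpos p
      rw [← hN'] at h1
      linarith
    have hMq : ∑ x ∈ Acube d, u x ^ q = 0 :=
      Finset.sum_eq_zero fun x hx => by rw [hux x hx, Real.zero_rpow hq.ne']
    rw [hMq, ← hN', Real.zero_rpow (by positivity : (1:ℝ)/q ≠ 0),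
      Real.zero_rpow (by positivity : (1:ℝ)/p ≠ 0)]
  · have key : ∀ x ∈ Acube d, u x ^ q ≤ u x ^ p * N ^ ((q-p)/p) := by
      intro x hx
      rcases eq_or_lt_of_le (hu x) with hx0 | hx0
      · rw [← hx0, Real.zero_rpow hq.ne', Real.zero_rpow hp.ne', zero_mul]
      · have hle : u x ^ p ≤ N :=
          Finset.single_le_sum (f := fun x => u x ^ p)
            (fun x _ => Real.rpow_nonneg (hu x) p) hx
        have hux_le : u x ≤ N ^ ((1:ℝ)/p) := by
          have h3 := Real.rpow_le_rpow (Real.rpow_nonneg (hu x) p) hle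
            (by positivity : (0:ℝ) ≤ 1/p)
          rwa [← Real.rpow_mul (hu x), mul_one_div, div_self hp.ne',
            Real.rpow_one] at h3
        have h2 : u x ^ (q-p) ≤ (N ^ ((1:ℝ)/p)) ^ (q-p) :=
          Real.rpow_le_rpow hx0.le hux_le (by linarith)
        calc u x ^ q = u x ^ p * u x ^ (q - p) := by
              rw [← Real.rpow_add hx0]; ring_nf
          _ ≤ u x ^ p * (N ^ ((1:ℝ)/p)) ^ (q-p) := by
              exact mul_le_mul_of_nonneg_left h2 (Real.rpow_nonneg (hu x) p)
          _ = u x ^ p * N ^ ((q-p)/p) := by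
              rw [← Real.rpow_mul hN0]
              congr 2
              ring
    have hsum_le : ∑ x ∈ Acube d, u x ^ q ≤ N ^ (q/p) := by
      calc ∑ x ∈ Acube d, u x ^ q ≤ ∑ x ∈ Acube d, u x ^ p * N ^ ((q-p)/p) :=
            Finset.sum_le_sum key
        _ = N * N ^ ((q-p)/p) := by rw [← Finset.sum_mul]
        _ = N ^ (q/p) := by
            rw [show N * N ^ ((q-p)/p) = N ^ (1:ℝ) * N ^ ((q-p)/p) by rw [Real.rpow_one],
              ← Real.rpow_add hN']
            congr 1
            field_simp
            ring
    have hq_sum_nonneg : 0 ≤ ∑ x ∈ Acube d, u x ^ q :=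
      Finset.sum_nonneg fun x _ => Real.rpow_nonneg (hu x) q
    have hfinal := Real.rpow_le_rpow hq_sum_nonneg hsum_le
      (by positivity : (0:ℝ) ≤ 1/q)
    rwa [← Real.rpow_mul hN0, show q/p * (1/q) = 1/p by field_simp] at hfinal

end Main


section Glue

lemma conj_iter_abs : ∀ (n : ℕ) (z : ℂ),
    ‖(fun z : ℂ => (starRingEnd ℂ) z)^[n] z‖ = ‖z‖ := by
  intro n
  induction n with
  | zero => intro z; rfl
  | succ n ihn =>
      intro z
      rw [Function.iterate_succ_apply, ihn ((starRingEnd ℂ) z)]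
      exact Complex.norm_conj z

lemma conj_iter_zero (n : ℕ) : (fun z : ℂ => (starRingEnd ℂ) z)^[n] 0 = 0 := by
  have h := conj_iter_abs n 0
  rw [norm_zero] at h
  exact norm_eq_zero.1 h

lemma gbox_eq_finsum {k d : ℕ} (f : (Fin d → ℤ) → ℂ) (hf : ∀ x, x ∉ Acube d → f x = 0) :
    gbox k f = ∑ a ∈ Acube d, ∑ h ∈ HS k d,
      ∏ ε : Fin k → Bool,
        (fun z : ℂ => (starRingEnd ℂ) z)^[(Finset.univ.filter fun i => ε i = true).card]
          (f (a + ∑ i ∈ Finset.univ.filter (fun i => ε i = true), h i)) := by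
  unfold gbox
  have houter : ∀ a : Fin d → ℤ, a ∉ Acube d →
      (∑' h : Fin k → Fin d → ℤ, ∏ ε : Fin k → Bool,
        (fun z : ℂ => (starRingEnd ℂ) z)^[(Finset.univ.filter fun i => ε i = true).card]
          (f (a + ∑ i ∈ Finset.univ.filter (fun i => ε i = true), h i))) = 0 := by
    intro a ha
    have hzero : ∀ h : Fin k → Fin d → ℤ,
        (∏ ε : Fin k → Bool,
          (fun z : ℂ => (starRingEnd ℂ) z)^[(Finset.univ.filter fun i => ε i = true).card]
            (f (a + ∑ i ∈ Finset.univ.filter (fun i => ε i = true), h i))) = 0 := by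
      intro h
      apply Finset.prod_eq_zero (Finset.mem_univ (fun _ => false : Fin k → Bool))
      have hfil : (Finset.univ.filter fun i : Fin k => (fun _ : Fin k => false) i = true)
          = (∅ : Finset (Fin k)) := by
        apply Finset.filter_false_of_mem
        intro i _
        simp
      rw [hfil]
      simp only [Finset.card_empty, Finset.sum_empty, Function.iterate_zero, id_eq, add_zero]
      exact hf a ha
    rw [tsum_congr hzero, tsum_zero]
  rw [tsum_eq_sum (fun a ha => houter a ha)]
  apply Finset.sum_congr rfl
  intro a ha
  apply tsum_eq_sum
  intro h hh
  rw [HS, Fintype.mem_piFinset] at hh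
  push_neg at hh
  obtain ⟨i, hi⟩ := hh
  apply Finset.prod_eq_zero (Finset.mem_univ (fun j : Fin k => decide (j = i)))
  have hfe : (Finset.univ.filter fun j : Fin k => (fun j : Fin k => decide (j = i)) j = true)
      = {i} := filter_single_eq i
  rw [hfe, Finset.sum_singleton]
  have hzero : f (a + h i) = 0 := by
    apply hf
    intro hmem
    apply hi
    rw [mem_Hcube]
    intro j
    have h1 := (mem_Acube.1 ha) j
    have h2 := (mem_Acube.1 hmem) j
    simp only [Pi.add_apply] at h2
    omega
  rw [hzero]
  exact conj_iter_zero _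

lemma abs_gbox_le {k d : ℕ} (f : (Fin d → ℤ) → ℂ) (hf : ∀ x, x ∉ Acube d → f x = 0) :
    ‖gbox k f‖ ≤ Box k d (fun x => ‖f x‖) := by
  rw [gbox_eq_finsum f hf]
  refine le_trans (norm_sum_le _ _) ?_
  unfold Box
  apply Finset.sum_le_sum
  intro a _
  refine le_trans (norm_sum_le _ _) ?_
  apply Finset.sum_le_sum
  intro h _
  rw [norm_prod]
  apply le_of_eq
  apply Finset.prod_congr rfl
  intro ε _
  rw [conj_iter_abs]
  rfl

lemma lpnorm_eq_finsum {d : ℕ} (p : ℝ) (hp : p ≠ 0) (f : (Fin d → ℤ) → ℂ)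
    (hf : ∀ x, x ∉ Acube d → f x = 0) :
    lpnorm p f = (∑ x ∈ Acube d, ‖f x‖ ^ p) ^ (1/p) := by
  unfold lpnorm
  congr 1
  rw [tsum_eq_sum (s := Acube d) ?h]
  case h =>
    intro x hx
    rw [hf x hx]
    simp only [norm_zero]
    exact Real.zero_rpow hp

end Glue

end GLP

theorem gowers_lp_binary_cube (d k : ℕ) (hk : 2 ≤ k) (f : (Fin d → ℤ) → ℂ)
    (hf : ∀ x, x ∉ cube 2 d → f x = 0)
    (p : ℝ) (hp : 0 < p) (hp' : p ≤ (2 : ℝ) ^ k / Real.logb 2 (2 * (k : ℝ) + 2)) :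
    gnorm k f ≤ lpnorm p f := by
  classical
  have hf' : ∀ x, x ∉ GLP.Acube d → f x = 0 := by
    intro x hx
    apply hf
    intro hc
    apply hx
    rw [GLP.mem_Acube]
    intro j
    have hcj := hc j
    omega
  set u : (Fin d → ℤ) → ℝ := fun x => ‖f x‖ with hu_def
  have hu : ∀ x, 0 ≤ u x := fun x => norm_nonneg _
  have huspt : GLP.Spt d u := by
    intro x hx
    show ‖f x‖ = 0
    rw [hf' x hx, norm_zero]
  set t := Real.logb 2 (2*(k:ℝ)+2) with ht_def
  have hkR : (2:ℝ) ≤ (k:ℝ) := by exact_mod_cast hk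
  have hpos : (0:ℝ) < 2*(k:ℝ)+2 := by linarith
  have h4 : (2:ℝ) ^ (2:ℝ) = 4 := by
    have h := Real.rpow_natCast (2:ℝ) 2
    rw [Nat.cast_ofNat] at h
    rw [h]
    norm_num
  have ht2 : 2 ≤ t := by
    rw [ht_def, Real.le_logb_iff_rpow_le (by norm_num) hpos, h4]
    linarith
  have ht0 : (0:ℝ) < t := by linarith
  have h2t : (2:ℝ)^t = 2*(k:ℝ)+2 := by
    rw [ht_def]
    exact Real.rpow_logb (by norm_num) (by norm_num) hpos
  set p0 : ℝ := (2:ℝ)^k / t with hp0_def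
  have hp0pos : 0 < p0 := by rw [hp0_def]; positivity
  have hp0t : p0 * t = (2:ℝ)^(k:ℕ) := by
    rw [hp0_def]
    field_simp
  have hpp0 : p ≤ p0 := hp'
  have hmain := GLP.box_le_rpow k t p0 ht2 h2t hp0t hp0pos d u hu huspt
  have habs := GLP.abs_gbox_le (k := k) f hf'
  have hsum0 : 0 ≤ ∑ x ∈ GLP.Acube d, u x ^ p0 :=
    Finset.sum_nonneg fun x _ => Real.rpow_nonneg (hu x) p0
  have hexp : (0:ℝ) ≤ (1:ℝ)/2^k := by positivity
  have e1 : gnorm k f ≤ (GLP.Box k d u) ^ ((1:ℝ)/2^k) := by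
    unfold gnorm
    exact Real.rpow_le_rpow (norm_nonneg _) habs hexp
  have e2 : (GLP.Box k d u) ^ ((1:ℝ)/2^k)
      ≤ ((∑ x ∈ GLP.Acube d, u x ^ p0) ^ t) ^ ((1:ℝ)/2^k) :=
    Real.rpow_le_rpow (GLP.Box_nonneg hu) hmain hexp
  have e3 : ((∑ x ∈ GLP.Acube d, u x ^ p0) ^ t) ^ ((1:ℝ)/2^k)
      = (∑ x ∈ GLP.Acube d, u x ^ p0) ^ ((1:ℝ)/p0) := by
    rw [← Real.rpow_mul hsum0]
    congr 1
    rw [hp0_def]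
    field_simp
  have e4 := GLP.lp_mono u hu hp hpp0
  rw [GLP.lpnorm_eq_finsum p hp.ne' f hf']
  calc gnorm k f ≤ (GLP.Box k d u) ^ ((1:ℝ)/2^k) := e1
    _ ≤ ((∑ x ∈ GLP.Acube d, u x ^ p0) ^ t) ^ ((1:ℝ)/2^k) := e2
    _ = (∑ x ∈ GLP.Acube d, u x ^ p0) ^ ((1:ℝ)/p0) := e3
    _ ≤ (∑ x ∈ GLP.Acube d, u x ^ p) ^ (1/p) := e4
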